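/- Let ι be a finite type, F = FreeGroup ι, Φ an automorphism of F, and G = F ⋊_Φ ℤ the associated semidirect product, with t ∈ G the generator of the ℤ-factor. Then for every f ∈ F, the cyclic subgroup H = ⟨f·t⟩ of G generated by (the image of) f times t is a separable subgroup of G: for every g ∈ G with g ∉ H there is a finite-index subgroup K of G with H ≤ K and g ∉ K. (Paper's Lemma 5.12.) -/

import Mathlib

namespace Lem512

lemma no_cancel_of_reduced {α : Type} [DecidableEq α] {w : List (α × Bool)}
    (hw : FreeGroup.reduce w = w) {i : ℕ} {x : α} {b : Bool}
    (e1 : w[i]? = some (x, b)) (e2 : w[i + 1]? = some (x, !b)) : False := by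
  have h2 : i + 1 < w.length := by
    by_contra h
    rw [List.getElem?_eq_none (le_of_not_gt h)] at e2
    cases e2
  have h1 : i < w.length := by omega
  rw [List.getElem?_eq_getElem h1, Option.some_inj] at e1
  rw [List.getElem?_eq_getElem h2, Option.some_inj] at e2
  apply FreeGroup.reduce.not (L₁ := w) (L₂ := w.take i) (L₃ := w.drop (i + 2)) (x := x) (b := b)
  rw [hw]
  conv_lhs => rw [← List.take_append_drop i w]
  rw [List.drop_eq_getElem_cons h1, e1]
  congr 2
  rw [List.drop_eq_getElem_cons h2, e2]

variable {α : Type} [DecidableEq α]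

/-- no cancellation in a word -/
def CancelFree (v : List (α × Bool)) : Prop :=
  ∀ (j : ℕ) (x : α) (b : Bool), v[j]? = some (x, b) → v[j + 1]? = some (x, !b) → False

abbrev upP (v : List (α × Bool)) (x : α) (j : Fin (v.length + 1)) : Prop :=
  (v[(j : ℕ)]? = some (x, true)) ∨ (0 < (j : ℕ) ∧ v[(j : ℕ) - 1]? = some (x, false))

abbrev dnQ (v : List (α × Bool)) (x : α) (j : Fin (v.length + 1)) : Prop :=
  (0 < (j : ℕ) ∧ v[(j : ℕ) - 1]? = some (x, true)) ∨ (v[(j : ℕ)]? = some (x, false))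

lemma mem_of_getElem? {v : List (α × Bool)} {j : ℕ} {c : α × Bool}
    (h : v[j]? = some c) : j < v.length := by
  by_contra hh
  rw [List.getElem?_eq_none (le_of_not_gt hh)] at h
  cases h

def stepEquiv (v : List (α × Bool)) (hv : CancelFree v) (x : α) :
    {j : Fin (v.length + 1) // upP v x j} ≃ {j : Fin (v.length + 1) // dnQ v x j} where
  toFun jh :=
    if h : v[(jh.1 : ℕ)]? = some (x, true) then
      ⟨⟨(jh.1 : ℕ) + 1, by have := mem_of_getElem? h; omega⟩,
        Or.inl ⟨Nat.succ_pos _, by simpa using h⟩⟩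
    else
      ⟨⟨(jh.1 : ℕ) - 1, by omega⟩, Or.inr (by
        have hd := jh.2.resolve_left h
        simpa using hd.2)⟩
  invFun jh :=
    if h : 0 < (jh.1 : ℕ) ∧ v[(jh.1 : ℕ) - 1]? = some (x, true) then
      ⟨⟨(jh.1 : ℕ) - 1, by omega⟩, Or.inl (by simpa using h.2)⟩
    else
      ⟨⟨(jh.1 : ℕ) + 1, by have := mem_of_getElem? (jh.2.resolve_left h); omega⟩,
        Or.inr ⟨Nat.succ_pos _, by simpa using jh.2.resolve_left h⟩⟩
  left_inv := by
    rintro ⟨⟨j, hj⟩, hP⟩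
    by_cases h : v[j]? = some (x, true)
    · simp only [dif_pos h]
      have hQ1 : 0 < ((⟨j + 1, by have := mem_of_getElem? h; omega⟩ : Fin (v.length + 1)) : ℕ) ∧
          v[((⟨j + 1, by have := mem_of_getElem? h; omega⟩ : Fin (v.length + 1)) : ℕ) - 1]? =
            some (x, true) := ⟨Nat.succ_pos _, by simpa using h⟩
      rw [dif_pos hQ1]
      apply Subtype.ext; apply Fin.ext; simp only [Fin.val_mk]; omega
    · simp only [dif_neg h]
      have hd := hP.resolve_left h
      simp only [Fin.val_mk] at hd
      have hQ1 : ¬ (0 < ((⟨j - 1, by omega⟩ : Fin (v.length + 1)) : ℕ) ∧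
          v[((⟨j - 1, by omega⟩ : Fin (v.length + 1)) : ℕ) - 1]? = some (x, true)) := by
        rintro ⟨hpos, heq⟩
        simp only [Fin.val_mk] at hpos heq
        have harith : j - 1 = (j - 2) + 1 := by omega
        exact hv (j - 2) x true (by rw [show j - 2 = j - 1 - 1 by omega]; simpa using heq) (by rw [← harith]; simpa using hd.2)
      rw [dif_neg hQ1]
      apply Subtype.ext
      apply Fin.ext
      simp only [Fin.val_mk]
      have hpos := hd.1
      omega
  right_inv := by
    rintro ⟨⟨j, hj⟩, hQ⟩
    by_cases h : 0 < j ∧ v[j - 1]? = some (x, true)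
    · simp only [dif_pos h]
      have hP1 : v[((⟨j - 1, by omega⟩ : Fin (v.length + 1)) : ℕ)]? = some (x, true) := by
        simpa using h.2
      rw [dif_pos hP1]
      apply Subtype.ext; apply Fin.ext; simp only [Fin.val_mk]; omega
    · simp only [dif_neg h]
      have hd := hQ.resolve_left h
      have hP1 : ¬ (v[((⟨j + 1, by
          have := mem_of_getElem? (hQ.resolve_left h)
          simp only [Fin.val_mk] at this; omega⟩ :
          Fin (v.length + 1)) : ℕ)]? = some (x, true)) := by
        intro heq
        exact hv j x false hd (by simpa using heq)
      rw [dif_neg hP1]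
      apply Subtype.ext; apply Fin.ext; simp only [Fin.val_mk]; omega

noncomputable def stepPerm (v : List (α × Bool)) (hv : CancelFree v) (x : α) :
    Equiv.Perm (Fin (v.length + 1)) :=
  letI : DecidablePred (upP v x) := Classical.decPred _
  letI : DecidablePred (dnQ v x) := Classical.decPred _
  (stepEquiv v hv x).extendSubtype

lemma stepPerm_up (v : List (α × Bool)) (hv : CancelFree v) (x : α) {j : ℕ}
    (h : v[j]? = some (x, true)) (hj : j < v.length + 1) (hj' : j + 1 < v.length + 1) :
    stepPerm v hv x ⟨j, hj⟩ = ⟨j + 1, hj'⟩ := by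
  unfold stepPerm
  letI : DecidablePred (upP v x) := Classical.decPred _
  letI : DecidablePred (dnQ v x) := Classical.decPred _
  rw [Equiv.extendSubtype_apply_of_mem (stepEquiv v hv x) _ (Or.inl h : upP v x ⟨j, hj⟩)]
  show ((stepEquiv v hv x ⟨⟨j, hj⟩, Or.inl h⟩ : {j : Fin (v.length + 1) // dnQ v x j}) :
    Fin (v.length + 1)) = _
  simp only [stepEquiv, Equiv.coe_fn_mk]
  rw [dif_pos (show v[((⟨j, hj⟩ : Fin (v.length + 1)) : ℕ)]? = some (x, true) from h)]

lemma stepPerm_down (v : List (α × Bool)) (hv : CancelFree v) (x : α) {j : ℕ}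
    (h : v[j]? = some (x, false)) (hj : j < v.length + 1) (hj' : j + 1 < v.length + 1) :
    stepPerm v hv x ⟨j + 1, hj'⟩ = ⟨j, hj⟩ := by
  unfold stepPerm
  letI : DecidablePred (upP v x) := Classical.decPred _
  letI : DecidablePred (dnQ v x) := Classical.decPred _
  have hP : upP v x ⟨j + 1, hj'⟩ := Or.inr ⟨Nat.succ_pos _, by simpa using h⟩
  rw [Equiv.extendSubtype_apply_of_mem (stepEquiv v hv x) _ hP]
  show ((stepEquiv v hv x ⟨⟨j + 1, hj'⟩, hP⟩ : {j : Fin (v.length + 1) // dnQ v x j}) :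
    Fin (v.length + 1)) = _
  simp only [stepEquiv, Equiv.coe_fn_mk]
  have hne : ¬ (v[((⟨j + 1, hj'⟩ : Fin (v.length + 1)) : ℕ)]? = some (x, true)) := by
    intro heq
    exact hv j x false h (by simpa using heq)
  rw [dif_neg hne]
  rfl



lemma exists_sep_hom {α : Type} (a : FreeGroup α) (ha : a ≠ 1) :
    ∃ (n : ℕ) (ψ : FreeGroup α →* Equiv.Perm (Fin (n + 1))), ψ a ≠ 1 := by
  classical
  set w := a.toWord with hwdef
  have hred : FreeGroup.reduce w = w := a.reduce_toWord
  set v := w.reverse with hvdef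
  have hlen : v.length = w.length := List.length_reverse (as := w)
  have hw0 : w ≠ [] := fun h => ha (FreeGroup.toWord_eq_nil_iff.mp h)
  have hwpos : 0 < w.length := List.length_pos_iff.mpr hw0
  have hv : CancelFree v := by
    intro j x b h1 h2
    have hj2 : j + 1 < v.length := mem_of_getElem? h2
    rw [hvdef, List.getElem?_reverse (by omega)] at h1
    rw [hvdef, List.getElem?_reverse (by omega)] at h2
    have harith : w.length - 1 - j = (w.length - 1 - (j + 1)) + 1 := by omega
    rw [harith] at h1
    exact no_cancel_of_reduced hred h2 (by rw [Bool.not_not]; exact h1)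
  set σ : α → Equiv.Perm (Fin (v.length + 1)) := fun x => stepPerm v hv x with hσdef
  have key : ∀ (u u' : List (α × Bool)), w = u' ++ u → ∀ (hu : u.length < v.length + 1),
      (List.prod (u.map fun l => cond l.2 (σ l.1) (σ l.1)⁻¹)) ⟨0, Nat.succ_pos _⟩
        = ⟨u.length, hu⟩ := by
    intro u
    induction u with
    | nil => intro u' hw' hu; simp
    | cons hd tl ih =>
      intro u' hw' hu
      obtain ⟨x, b⟩ := hd
      have hw'' : w = (u' ++ [(x, b)]) ++ tl := by rw [hw']; simp
      have htl : tl.length < v.length + 1 := by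
        simp only [List.length_cons] at hu; omega
      have hval := ih (u' ++ [(x, b)]) hw'' htl
      have hvpos : v[tl.length]? = some (x, b) := by
        have hveq : v = tl.reverse ++ ((x, b) :: u'.reverse) := by
          rw [hvdef, hw']; simp
        rw [hveq, List.getElem?_append_right (by simp)]
        simp
      have hlt : tl.length < v.length := mem_of_getElem? hvpos
      rw [List.map_cons, List.prod_cons, Equiv.Perm.mul_apply, hval]
      cases b
      · show (σ x)⁻¹ _ = _
        have hstep := stepPerm_down v hv x hvpos (by omega) (by omega)
        rw [hσdef]
        rw [← hstep, Equiv.Perm.inv_def, Equiv.symm_apply_apply]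
        rfl
      · show σ x _ = _
        rw [hσdef]
        exact stepPerm_up v hv x hvpos (by omega) (by simpa using hu)
  refine ⟨v.length, FreeGroup.lift σ, ?_⟩
  intro hone
  have hψa : FreeGroup.lift σ a = List.prod (w.map fun l => cond l.2 (σ l.1) (σ l.1)⁻¹) := by
    conv_lhs => rw [← FreeGroup.mk_toWord (x := a)]
    exact FreeGroup.lift_mk
  have hval : FreeGroup.lift σ a ⟨0, Nat.succ_pos _⟩ = ⟨w.length, by omega⟩ := by
    rw [hψa]
    exact key w [] (by simp) (by omega)
  rw [hone] at hval
  simp only [Equiv.Perm.one_apply] at hval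
  have := Fin.mk.injEq 0 (Nat.succ_pos v.length) w.length (by omega) ▸ hval
  exact absurd (Fin.mk.inj_iff.mp hval) (by omega)

lemma exists_invariant_subgroup {α : Type} [Finite α] {a : FreeGroup α} (ha : a ≠ 1) :
    ∃ N : Subgroup (FreeGroup α), N.FiniteIndex ∧ N.Normal ∧
      (∀ (σ : MulAut (FreeGroup α)) (x : FreeGroup α), x ∈ N → σ x ∈ N) ∧ a ∉ N := by
  obtain ⟨n, ψ₀, hψ₀⟩ := exists_sep_hom a ha
  haveI : Finite (FreeGroup α →* Equiv.Perm (Fin (n + 1))) :=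
    Finite.of_equiv _ FreeGroup.lift
  refine ⟨⨅ ψ : FreeGroup α →* Equiv.Perm (Fin (n + 1)), ψ.ker, ?_, ?_, ?_, ?_⟩
  · exact Subgroup.finiteIndex_iInf fun ψ => inferInstance
  · constructor
    intro x hx g
    rw [Subgroup.mem_iInf] at hx ⊢
    intro ψ
    have := hx ψ
    rw [MonoidHom.mem_ker] at this ⊢
    simp [this]
  · intro σ x hx
    rw [Subgroup.mem_iInf] at hx ⊢
    intro ψ
    have := hx (ψ.comp σ.toMonoidHom)
    rw [MonoidHom.mem_ker] at this ⊢
    simpa using this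
  · intro hmem
    rw [Subgroup.mem_iInf] at hmem
    exact hψ₀ (hmem ψ₀)

open SemidirectProduct Multiplicative


lemma exists_K {F : Type} [Group F] (φ : Multiplicative ℤ →* MulAut F)
    (N : Subgroup F) (hfin : N.FiniteIndex) (hNorm : N.Normal)
    (hinv : ∀ (σ : MulAut F) (x : F), x ∈ N → σ x ∈ N)
    (c : F ⋊[φ] Multiplicative ℤ) (hc : c.right = ofAdd 1) :
    ∃ K : Subgroup (F ⋊[φ] Multiplicative ℤ), K.FiniteIndex ∧ Subgroup.zpowers c ≤ K ∧
      ∀ x : F ⋊[φ] Multiplicative ℤ,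
        x ∈ K ↔ x.left * ((c ^ (toAdd x.right)).left)⁻¹ ∈ N := by
  classical
  have hcr : ∀ k : ℤ, (c ^ k).right = ofAdd k := by
    intro k
    have h1 : (c ^ k).right = rightHom (c ^ k) := rfl
    rw [h1, map_zpow]
    have h2 : rightHom c = ofAdd 1 := hc
    rw [h2]
    rw [← ofAdd_zsmul]
    norm_num
  set lc : ℤ → F := fun k => (c ^ k).left with hlcdef
  have hlc0 : lc 0 = 1 := by simp [hlcdef]
  have hlc_add : ∀ k l : ℤ, lc (k + l) = lc k * φ (ofAdd k) (lc l) := by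
    intro k l
    have h2 := congrArg SemidirectProduct.left (zpow_add c k l)
    rw [mul_left, hcr] at h2
    exact h2
  have hlc_neg : ∀ k : ℤ, lc (-k) = φ (ofAdd (-k)) (lc k)⁻¹ := by
    intro k
    have h2 := congrArg SemidirectProduct.left (zpow_neg c k)
    rw [inv_left, hcr, ← ofAdd_neg, map_inv] at h2
    exact h2.trans (map_inv _ _).symm
  obtain ⟨K, hKmem⟩ : ∃ K : Subgroup (F ⋊[φ] Multiplicative ℤ),
      ∀ x : F ⋊[φ] Multiplicative ℤ, x ∈ K ↔ x.left * (lc (toAdd x.right))⁻¹ ∈ N := by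
    refine ⟨{ carrier := {x | x.left * (lc (toAdd x.right))⁻¹ ∈ N}
              one_mem' := by
                show (1 : F ⋊[φ] Multiplicative ℤ).left *
                  (lc (toAdd (1 : F ⋊[φ] Multiplicative ℤ).right))⁻¹ ∈ N
                simpa [hlc0] using one_mem N
              mul_mem' := ?_
              inv_mem' := ?_ }, fun x => Iff.rfl⟩
    · intro x y hx hy
      simp only [Set.mem_setOf_eq, mul_left, mul_right] at hx hy ⊢
      have hφx : φ x.right = φ (ofAdd (toAdd x.right)) := by rw [ofAdd_toAdd]
      rw [toAdd_mul, hlc_add, hφx]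
      have key : x.left * (φ (ofAdd (toAdd x.right))) y.left *
            (lc (toAdd x.right) * (φ (ofAdd (toAdd x.right))) (lc (toAdd y.right)))⁻¹
          = (x.left * (lc (toAdd x.right))⁻¹) *
            (lc (toAdd x.right) *
              ((φ (ofAdd (toAdd x.right))) (y.left * (lc (toAdd y.right))⁻¹)) *
              (lc (toAdd x.right))⁻¹) := by
        simp only [map_mul, map_inv]
        group
      rw [key]
      exact mul_mem hx (hNorm.conj_mem _ (hinv _ _ hy) _)
    · intro x hx
      simp only [Set.mem_setOf_eq, inv_left, inv_right] at hx ⊢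
      have hφx : φ x.right⁻¹ = φ (ofAdd (-(toAdd x.right))) := by
        rw [ofAdd_neg, ofAdd_toAdd]
      rw [toAdd_inv, hlc_neg, hφx]
      have key : (φ (ofAdd (-(toAdd x.right)))) x.left⁻¹ *
            ((φ (ofAdd (-(toAdd x.right)))) (lc (toAdd x.right))⁻¹)⁻¹
          = (φ (ofAdd (-(toAdd x.right)))) ((lc (toAdd x.right))⁻¹ *
              (x.left * (lc (toAdd x.right))⁻¹)⁻¹ * lc (toAdd x.right)) := by
        simp only [map_mul, map_inv]
        group
      rw [key]
      refine hinv _ _ ?_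
      simpa using hNorm.conj_mem _ (inv_mem hx) (lc (toAdd x.right))⁻¹
  have hcK : c ∈ K := by
    rw [hKmem]
    have h1 : toAdd c.right = 1 := by rw [hc]; rfl
    rw [h1]
    show c.left * ((c ^ (1 : ℤ)).left)⁻¹ ∈ N
    rw [zpow_one]
    simpa using one_mem N
  have hle : Subgroup.zpowers c ≤ K := Subgroup.zpowers_le.mpr hcK
  refine ⟨K, ?_, hle, fun x => hKmem x⟩
  haveI := hfin
  haveI : Finite (F ⧸ N) := inferInstance
  have hresp : ∀ u1 u2 : F, @Setoid.r _ (QuotientGroup.leftRel N) u1 u2 →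
      (QuotientGroup.mk (inl u1 : F ⋊[φ] Multiplicative ℤ) :
        (F ⋊[φ] Multiplicative ℤ) ⧸ K) = QuotientGroup.mk (inl u2) := by
    intro u1 u2 h12
    have h12' : u1⁻¹ * u2 ∈ N := (QuotientGroup.leftRel_apply).mp h12
    rw [QuotientGroup.eq]
    rw [← map_inv, ← map_mul, hKmem]
    show (u1⁻¹ * u2) * (lc (toAdd (1 : Multiplicative ℤ)))⁻¹ ∈ N
    simpa [hlc0] using h12'
  set θ : F ⧸ N → (F ⋊[φ] Multiplicative ℤ) ⧸ K := fun q =>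
    Quotient.liftOn' q (fun u => QuotientGroup.mk (inl u : F ⋊[φ] Multiplicative ℤ)) hresp
    with hθdef
  have hsurj : Function.Surjective θ := by
    intro z
    obtain ⟨x, rfl⟩ := QuotientGroup.mk_surjective z
    refine ⟨QuotientGroup.mk (x.left * (lc (toAdd x.right))⁻¹), ?_⟩
    show (QuotientGroup.mk (inl (x.left * (lc (toAdd x.right))⁻¹) : F ⋊[φ] Multiplicative ℤ) :
      (F ⋊[φ] Multiplicative ℤ) ⧸ K) = QuotientGroup.mk x
    symm
    have hxeq : x = inl (x.left * (lc (toAdd x.right))⁻¹) * c ^ (toAdd x.right) := by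
      refine SemidirectProduct.ext ?_ ?_
      · show x.left = _
        rw [mul_left, left_inl, right_inl, map_one]
        show x.left = x.left * (lc (toAdd x.right))⁻¹ * lc (toAdd x.right)
        rw [inv_mul_cancel_right]
      · show x.right = _
        rw [mul_right, right_inl, hcr, one_mul, ofAdd_toAdd]
    conv_lhs => rw [hxeq]
    exact QuotientGroup.mk_mul_of_mem _ (hle (Subgroup.mem_zpowers_iff.mpr ⟨toAdd x.right, rfl⟩))
  haveI : Finite ((F ⋊[φ] Multiplicative ℤ) ⧸ K) := Finite.of_surjective θ hsurj
  exact K.finiteIndex_of_finite_quotient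

end Lem512

open SemidirectProduct Multiplicative Lem512 in
/-- **Separability of `⟨f·t⟩` in `F ⋊_Φ ℤ`** (paper's Lemma 5.12).
`F = FreeGroup ι` with `ι` finite, `Φ` an automorphism of `F` encoded by the
homomorphism `φ : Multiplicative ℤ →* MulAut F` with `φ (ofAdd k) = Φ ^ k`,
`G = F ⋊[φ] Multiplicative ℤ`, and `t = inr (ofAdd 1)`.  For every `f ∈ F`,
the cyclic subgroup `⟨f·t⟩` is separable in `G`. -/
theorem cyclic_subgroup_fxt_separable
    (ι : Type) [Finite ι]
    (Φ : MulAut (FreeGroup ι))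
    (φ : Multiplicative ℤ →* MulAut (FreeGroup ι))
    (hφ : ∀ k : ℤ, φ (Multiplicative.ofAdd k) = Φ ^ k)
    (f : FreeGroup ι)
    (g : FreeGroup ι ⋊[φ] Multiplicative ℤ)
    (hg : g ∉ Subgroup.zpowers
      ((SemidirectProduct.inl f : FreeGroup ι ⋊[φ] Multiplicative ℤ) *
        SemidirectProduct.inr (Multiplicative.ofAdd (1 : ℤ)))) :
    ∃ K : Subgroup (FreeGroup ι ⋊[φ] Multiplicative ℤ),
      K.FiniteIndex ∧
      Subgroup.zpowers
        ((SemidirectProduct.inl f : FreeGroup ι ⋊[φ] Multiplicative ℤ) *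
          SemidirectProduct.inr (Multiplicative.ofAdd (1 : ℤ))) ≤ K ∧
      g ∉ K := by
  set c : FreeGroup ι ⋊[φ] Multiplicative ℤ := inl f * inr (ofAdd (1 : ℤ)) with hcdef
  have hcright : c.right = ofAdd (1 : ℤ) := by
    rw [hcdef, mul_right, right_inl, right_inr, one_mul]
  have hcrm : ∀ k : ℤ, (c ^ k).right = ofAdd k := by
    intro k
    have h1 : (c ^ k).right = SemidirectProduct.rightHom (c ^ k) := rfl
    rw [h1, map_zpow, show SemidirectProduct.rightHom c = ofAdd (1 : ℤ) from hcright,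
      ← ofAdd_zsmul]
    norm_num
  set m : ℤ := toAdd g.right with hmdef
  have hbr : (g * (c ^ m)⁻¹).right = 1 := by
    rw [mul_right, inv_right, hcrm, hmdef, ofAdd_toAdd, mul_inv_cancel]
  set a : FreeGroup ι := (g * (c ^ m)⁻¹).left with hadef
  have hb : g * (c ^ m)⁻¹ = inl a := SemidirectProduct.ext rfl (by rw [right_inl, hbr])
  have hg_eq : g = inl a * c ^ m := by rw [← hb, inv_mul_cancel_right]
  have ha : a ≠ 1 := by
    intro h
    apply hg
    rw [h, map_one, one_mul] at hg_eq
    exact hg_eq ▸ Subgroup.mem_zpowers_iff.mpr ⟨m, rfl⟩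
  obtain ⟨N, hNfin, hNnorm, hNinv, haN⟩ := exists_invariant_subgroup ha
  obtain ⟨K, hKfin, hKle, hKmem⟩ := exists_K φ N hNfin hNnorm hNinv c hcright
  refine ⟨K, hKfin, hKle, ?_⟩
  intro hgK
  rw [hKmem] at hgK
  apply haN
  have hkey : a = g.left * ((c ^ m).left)⁻¹ := by
    have hgr : g.right = ofAdd m := (ofAdd_toAdd _).symm
    rw [hadef, mul_left, inv_left, hcrm m, hgr]
    congr 1
    rw [← MulAut.mul_apply, ← map_mul, mul_inv_cancel, map_one, MulAut.one_apply]
  rw [hkey]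
  exact hgK
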